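/- For n ≥ 3, the rank (minimal size of a generating set) of the monoid wEnd P⃗ₙ is n−1. -/

import Mathlib

def wEnd (n : ℕ) (α : Fin n → Fin n) : Prop :=
  ∀ u v : Fin n, (v : ℕ) = (u : ℕ) + 1 → α u ≠ α v → (α v : ℕ) = (α u : ℕ) + 1

namespace WAux

def fj (n j : ℕ) : Function.End (Fin n) :=
  fun i => ⟨if (i : ℕ) ≤ j then i else (i : ℕ) - 1, by have := i.isLt; split <;> omega⟩

def tmap (n : ℕ) : Function.End (Fin n) :=
  fun i => ⟨min ((i : ℕ) + 1) (n - 1), by have := i.isLt; omega⟩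

@[simp] lemma fj_val (n j : ℕ) (i : Fin n) :
    (fj n j i : ℕ) = if (i : ℕ) ≤ j then (i : ℕ) else (i : ℕ) - 1 := rfl

@[simp] lemma tmap_val (n : ℕ) (i : Fin n) :
    (tmap n i : ℕ) = min ((i : ℕ) + 1) (n - 1) := rfl

lemma step {n : ℕ} {f : Fin n → Fin n} (hf : wEnd n f) (i : ℕ) (h : i + 1 < n) :
    (f ⟨i + 1, h⟩ : ℕ) = (f ⟨i, by omega⟩ : ℕ) ∨
    (f ⟨i + 1, h⟩ : ℕ) = (f ⟨i, by omega⟩ : ℕ) + 1 := by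
  by_cases he : f ⟨i, by omega⟩ = f ⟨i + 1, h⟩
  · left; rw [he]
  · right; exact hf ⟨i, by omega⟩ ⟨i + 1, h⟩ rfl he

lemma mono_lip {n : ℕ} {f : Fin n → Fin n} (hf : wEnd n f) (d i : ℕ) (h : i + d < n) :
    (f ⟨i, by omega⟩ : ℕ) ≤ (f ⟨i + d, h⟩ : ℕ) ∧
    (f ⟨i + d, h⟩ : ℕ) ≤ (f ⟨i, by omega⟩ : ℕ) + d := by
  induction d with
  | zero =>
      have e : (⟨i + 0, h⟩ : Fin n) = ⟨i, by omega⟩ := rfl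
      rw [e]; omega
  | succ d ih =>
      have h1 : i + d < n := by omega
      have e : (⟨i + (d + 1), h⟩ : Fin n) = ⟨i + d + 1, by omega⟩ := rfl
      rw [e]
      have := step hf (i + d) (by omega)
      have := ih h1
      constructor <;> omega

lemma wEnd_comp {n : ℕ} {f g : Fin n → Fin n} (hf : wEnd n f) (hg : wEnd n g) :
    wEnd n (f ∘ g) := by
  intro u v huv hne
  by_cases he : g u = g v
  · exact absurd (congrArg f he) hne
  · exact hf (g u) (g v) (hg u v huv he) hne

lemma wEnd_fj (n j : ℕ) : wEnd n (fj n j) := by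
  intro u v huv hne
  have hne' : (fj n j u : ℕ) ≠ (fj n j v : ℕ) := fun hh => hne (Fin.ext hh)
  simp only [fj_val] at hne' ⊢
  split_ifs at hne' ⊢ <;> omega

lemma wEnd_tmap (n : ℕ) : wEnd n (tmap n) := by
  intro u v huv hne
  have hne' : (tmap n u : ℕ) ≠ (tmap n v : ℕ) := fun hh => hne (Fin.ext hh)
  simp only [tmap_val] at hne' ⊢
  omega

lemma inj_eq_one {n : ℕ} {f : Function.End (Fin n)} (hf : wEnd n f) (hinj : Function.Injective f)
    (hn : 0 < n) : f = 1 := by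
  have key : ∀ i : ℕ, ∀ h : i < n, (f ⟨i, h⟩ : ℕ) = (f ⟨0, hn⟩ : ℕ) + i := by
    intro i
    induction i with
    | zero => intro h; rfl
    | succ i ih =>
        intro h
        have h1 : i < n := by omega
        rcases step hf i h with he | he
        · exact absurd (hinj (Fin.ext he : f ⟨i+1, h⟩ = f ⟨i, h1⟩)) (by simp [Fin.ext_iff])
        · rw [he, ih h1]; omega
    
  have h0 : (f ⟨0, hn⟩ : ℕ) = 0 := by
    have := key (n - 1) (by omega)
    have := (f ⟨n - 1, by omega⟩).isLt
    omega
  funext i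
  exact Fin.ext (by rw [Function.End.one_def, id_eq, key i i.isLt, h0, Nat.zero_add])

lemma wEnd_one (n : ℕ) : wEnd n (1 : Function.End (Fin n)) := by
  intro u v huv _
  exact huv

lemma wEnd_prod {n : ℕ} : ∀ (l : List (Function.End (Fin n))),
    (∀ g ∈ l, wEnd n g) → wEnd n l.prod := by
  intro l
  induction l with
  | nil => intro _; simpa using wEnd_one n
  | cons g l ih =>
      intro h
      rw [List.prod_cons]
      exact wEnd_comp (h g (by simp)) (ih fun g' hg' => h g' (by simp [hg']))

lemma fj_collapse {n j : ℕ} (hj : j + 1 < n) :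
    fj n j ⟨j, by omega⟩ = fj n j ⟨j + 1, hj⟩ := by
  apply Fin.ext; simp only [fj_val]; split_ifs <;> omega

lemma fj_ne {n j k : ℕ} (hk : k + 1 < n) (hkj : k ≠ j) :
    fj n j ⟨k, by omega⟩ ≠ fj n j ⟨k + 1, hk⟩ := by
  intro h
  have := congrArg Fin.val h
  simp only [fj_val] at this
  split_ifs at this <;> omega

lemma fj_fiber {n j : ℕ} (hj : j + 1 < n) {u v : Fin n} (h : fj n j u = fj n j v) :
    u = v ∨ ((u : ℕ) = j ∧ (v : ℕ) = j + 1) ∨ ((u : ℕ) = j + 1 ∧ (v : ℕ) = j) := by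
  have hval := congrArg Fin.val h
  simp only [fj_val] at hval
  have := u.isLt; have := v.isLt
  split_ifs at hval <;> [skip; skip; skip; skip] <;>
    first
      | (left; exact Fin.ext (by omega))
      | (right; omega)
      | omega

def collapsesExactly (n j : ℕ) (g : Function.End (Fin n)) : Prop :=
  ∀ k : ℕ, ∀ hk : k + 1 < n, (g ⟨k, by omega⟩ = g ⟨k + 1, hk⟩ ↔ k = j)

lemma lb_list {n : ℕ} (l : List (Function.End (Fin n))) :
    (∀ g ∈ l, wEnd n g) → ∀ j : ℕ, ∀ hj : j + 1 < n, l.prod = fj n j →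
      ∃ g ∈ l, collapsesExactly n j g := by
  induction l using List.reverseRecOn with
  | nil =>
      intro _ j hj hp
      exfalso
      have := congrArg (fun F : Function.End (Fin n) => (F ⟨j + 1, hj⟩ : ℕ)) hp
      simp only [Function.End.one_def, List.prod_nil, id_eq, fj_val] at this
      split_ifs at this <;> omega
  | append_singleton l α ih =>
      intro hw j hj hp
      rw [List.prod_append, List.prod_singleton] at hp
      have hwα : wEnd n α := hw α (by simp)
      have hprodval : ∀ x : Fin n, l.prod (α x) = fj n j x := by
        intro x
        have := congrArg (fun F : Function.End (Fin n) => F x) hp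
        exact this
      by_cases h1 : α ⟨j, by omega⟩ = α ⟨j + 1, hj⟩
      · refine ⟨α, by simp, ?_⟩
        intro k hk
        constructor
        · intro hcol
          by_contra hkj
          apply fj_ne hk hkj
          rw [← hprodval, ← hprodval, hcol]
        · intro hkj
          subst hkj
          exact h1
      · have hinj : Function.Injective α := by
          intro u v huv
          have : fj n j u = fj n j v := by rw [← hprodval, ← hprodval, huv]
          rcases fj_fiber hj this with h | ⟨h1', h2'⟩ | ⟨h1', h2'⟩
          · exact h
          · exact absurd (by rw [← (Fin.ext h1' : u = ⟨j, by omega⟩),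
              ← (Fin.ext h2' : v = ⟨j + 1, hj⟩), huv]) h1
          · exact absurd (by rw [← (Fin.ext h2' : v = ⟨j, by omega⟩),
              ← (Fin.ext h1' : u = ⟨j + 1, hj⟩), huv]) h1
        have hone : α = 1 := inj_eq_one hwα hinj (by omega)
        rw [hone, mul_one] at hp
        obtain ⟨g, hg, hcg⟩ := ih (fun g hg => hw g (by simp [hg])) j hj hp
        exact ⟨g, by simp [hg], hcg⟩

lemma collapsesExactly_ne {n : ℕ} {j j' : ℕ} (hj : j + 1 < n) (hj' : j' + 1 < n)
    (hne : j ≠ j') {g g' : Function.End (Fin n)}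
    (h : collapsesExactly n j g) (h' : collapsesExactly n j' g') : g ≠ g' := by
  intro he
  subst he
  exact hne (((h' j hj).mp ((h j hj).mpr rfl)).symm ▸ rfl)

lemma mono_lip' {n : ℕ} {f : Fin n → Fin n} (hf : wEnd n f) {a b : ℕ} (hab : a ≤ b)
    (hb : b < n) :
    (f ⟨a, by omega⟩ : ℕ) ≤ (f ⟨b, hb⟩ : ℕ) ∧
    (f ⟨b, hb⟩ : ℕ) ≤ (f ⟨a, by omega⟩ : ℕ) + (b - a) := by
  have h := mono_lip hf (b - a) a (by omega)
  have e : (⟨a + (b - a), by omega⟩ : Fin n) = ⟨b, hb⟩ := Fin.ext (by simp; omega)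
  rw [e] at h
  exact h

lemma tpow_val {n : ℕ} (hn : 0 < n) (a : ℕ) (x : Fin n) :
    (((tmap n) ^ a) x : ℕ) = min ((x : ℕ) + a) (n - 1) := by
  induction a generalizing x with
  | zero =>
      have := x.isLt
      simp [Function.End.one_def]
      omega
  | succ a ih =>
      have hx := x.isLt
      have h1 : ((tmap n) ^ (a + 1)) x = ((tmap n) ^ a) (tmap n x) := by
        rw [pow_succ, Function.End.mul_def]; rfl
      rw [h1, ih (tmap n x)]
      simp only [tmap_val]
      omega

def genSet (n : ℕ) : Set (Function.End (Fin n)) :=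
  insert (tmap n) ((fun j => fj n j) '' ↑(Finset.range (n - 2)))

lemma tmap_mem {n : ℕ} : tmap n ∈ genSet n := Set.mem_insert _ _

lemma fj_mem {n j : ℕ} (hj : j < n - 2) : fj n j ∈ genSet n :=
  Set.mem_insert_of_mem _ ⟨j, by simpa using hj, rfl⟩

lemma f0_t_eq {n : ℕ} (hn : 3 ≤ n) : fj n (n - 2) = fj n 0 * tmap n := by
  funext i
  apply Fin.ext
  have := i.isLt
  show _ = ((fj n 0) (tmap n i) : ℕ)
  simp only [fj_val, tmap_val, Nat.min_def]
  split_ifs <;> omega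

lemma fj_mem_closure {n j : ℕ} (hn : 3 ≤ n) (hj : j ≤ n - 2) :
    fj n j ∈ Submonoid.closure (genSet n) := by
  rcases lt_or_eq_of_le hj with h | h
  · exact Submonoid.subset_closure (fj_mem h)
  · rw [h, f0_t_eq hn]
    exact mul_mem (Submonoid.subset_closure (fj_mem (by omega)))
      (Submonoid.subset_closure tmap_mem)

lemma gen0 {n : ℕ} (hn : 3 ≤ n) : ∀ m : ℕ, ∀ f : Function.End (Fin n), wEnd n f →
    (f ⟨0, by omega⟩ : ℕ) = 0 → (n - 1) - (f ⟨n - 1, by omega⟩ : ℕ) ≤ m →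
    f ∈ Submonoid.closure (genSet n) := by
  intro m
  induction m with
  | zero =>
      intro f hf h0 hm
      have hlast : (f ⟨n - 1, by omega⟩ : ℕ) = n - 1 := by
        have := (f ⟨n - 1, by omega⟩).isLt; omega
      have : f = 1 := by
        funext i
        apply Fin.ext
        have hi := i.isLt
        have h1 := mono_lip' hf (Nat.zero_le (i : ℕ)) hi
        have h2 := mono_lip' hf (show (i : ℕ) ≤ n - 1 by omega) (show n - 1 < n by omega)
        simp only [Fin.eta] at h1 h2
        show (f i : ℕ) = (i : ℕ)
        omega
      rw [this]; exact one_mem _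
  | succ m ih =>
      intro f hf h0 hm
      by_cases hlast : (f ⟨n - 1, by omega⟩ : ℕ) = n - 1
      · exact ih f hf h0 (by omega)
      · -- there is a collapsed edge
        have hlast' : (f ⟨n - 1, by omega⟩ : ℕ) < n - 1 := by
          have := (f ⟨n - 1, by omega⟩).isLt; omega
        have hexj : ∃ j : ℕ, ∃ hj : j + 1 < n, f ⟨j, by omega⟩ = f ⟨j + 1, hj⟩ := by
          by_contra hno
          push_neg at hno
          have key : ∀ i : ℕ, ∀ hi : i < n, (f ⟨i, hi⟩ : ℕ) = i := by
            intro i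
            induction i with
            | zero => intro hi; rw [h0]
            | succ i ih2 =>
                intro hi
                rcases step hf i hi with he | he
                · exact absurd (Fin.ext he.symm) (hno i hi)
                · rw [he, ih2 (by omega)]
          exact hlast (key (n - 1) (by omega))
        obtain ⟨j, hj, hcol⟩ := hexj
        have hjn : j < n := by omega
        have hub : ∀ i : Fin n, (f i : ℕ) ≤ n - 2 := by
          intro i
          have hi := i.isLt
          have h2 := mono_lip' hf (show (i : ℕ) ≤ n - 1 by omega) (show n - 1 < n by omega)
          simp only [Fin.eta] at h2
          omega
        obtain ⟨f', hf'val1, hf'val2⟩ :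
            ∃ f' : Function.End (Fin n), (∀ i : Fin n, (i : ℕ) ≤ j → f' i = f i) ∧
              (∀ i : Fin n, ¬ (i : ℕ) ≤ j → (f' i : ℕ) = (f i : ℕ) + 1) := by
          refine ⟨fun i => if (i : ℕ) ≤ j then f i else tmap n (f i), fun i h => ?_,
            fun i h => ?_⟩
          · show (if (i : ℕ) ≤ j then f i else tmap n (f i)) = f i
            rw [if_pos h]
          · show (Fin.val (if (i : ℕ) ≤ j then f i else tmap n (f i))) = (f i : ℕ) + 1
            rw [if_neg h, tmap_val]
            have := hub i
            omega
        have hwf' : wEnd n f' := by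
          intro u v huv hne
          have hfuv : (f v : ℕ) = (f u : ℕ) ∨ (f v : ℕ) = (f u : ℕ) + 1 := by
            by_cases he : f u = f v
            · left; rw [he]
            · right; exact hf u v huv he
          have hneval : (f' u : ℕ) ≠ (f' v : ℕ) := fun hh => hne (Fin.ext hh)
          by_cases hu : (u : ℕ) ≤ j
          · by_cases hv : (v : ℕ) ≤ j
            · have e1 := hf'val1 u hu
              have e2 := hf'val1 v hv
              rw [e1, e2] at hneval ⊢
              omega
            · have huj : u = ⟨j, hjn⟩ := Fin.ext (show (u : ℕ) = j by omega)
              have hvj : v = ⟨j + 1, hj⟩ := Fin.ext (show (v : ℕ) = j + 1 by omega)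
              have hval : (f u : ℕ) = (f v : ℕ) := by
                rw [huj, hvj]; exact congrArg Fin.val hcol
              have e1 := congrArg Fin.val (hf'val1 u hu)
              have e2 := hf'val2 v hv
              omega
          · have hv : ¬ (v : ℕ) ≤ j := by omega
            have e1 := hf'val2 u hu
            have e2 := hf'val2 v hv
            omega
        have hf'0 : (f' ⟨0, by omega⟩ : ℕ) = 0 := by
          rw [hf'val1 ⟨0, by omega⟩ (Nat.zero_le j)]
          exact h0
        have hf'last : (f' ⟨n - 1, by omega⟩ : ℕ) = (f ⟨n - 1, by omega⟩ : ℕ) + 1 :=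
          hf'val2 ⟨n - 1, by omega⟩ (show ¬ (n - 1) ≤ j by omega)
        have hmem' : f' ∈ Submonoid.closure (genSet n) :=
          ih f' hwf' hf'0 (by omega)
        have hdecomp : f = fj n ((f ⟨j, hjn⟩ : ℕ)) * f' := by
          funext i
          apply Fin.ext
          show (f i : ℕ) = (fj n ((f ⟨j, hjn⟩ : ℕ)) (f' i) : ℕ)
          simp only [fj_val]
          have hi := i.isLt
          by_cases hij : (i : ℕ) ≤ j
          · have hmono := mono_lip' hf hij hjn
            simp only [Fin.eta] at hmono
            rw [hf'val1 i hij, if_pos (by exact hmono.1)]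
          · have hmono := mono_lip' hf (show j + 1 ≤ (i : ℕ) by omega) hi
            simp only [Fin.eta] at hmono
            have hcv : (f ⟨j, hjn⟩ : ℕ) = (f ⟨j + 1, hj⟩ : ℕ) := congrArg Fin.val hcol
            rw [hf'val2 i hij, if_neg (by omega)]
            omega
        rw [hdecomp]
        exact mul_mem (fj_mem_closure hn (by have := hub ⟨j, by omega⟩; omega)) hmem'

lemma gen_main {n : ℕ} (hn : 3 ≤ n) (f : Function.End (Fin n)) (hf : wEnd n f) :
    f ∈ Submonoid.closure (genSet n) := by
  set a : ℕ := (f ⟨0, by omega⟩ : ℕ) with ha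
  have hge : ∀ i : Fin n, a ≤ (f i : ℕ) := by
    intro i
    have hi := i.isLt
    have h1 := mono_lip' hf (Nat.zero_le (i : ℕ)) hi
    simp only [Fin.eta] at h1
    exact h1.1
  set f0 : Function.End (Fin n) := (fun i => ⟨(f i : ℕ) - a, by
    have := (f i).isLt; omega⟩) with hf0def
  have hf0val : ∀ i : Fin n, (f0 i : ℕ) = (f i : ℕ) - a := fun i => rfl
  have hwf0 : wEnd n f0 := by
    intro u v huv hne
    have hgu := hge u
    have hgv := hge v
    have hne' : (f u : ℕ) ≠ (f v : ℕ) := by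
      intro hh
      exact hne (Fin.ext (by rw [hf0val, hf0val, hh]))
    have := hf u v huv (fun hh => hne' (by rw [hh]))
    rw [hf0val, hf0val]
    omega
  have hdecomp : f = (tmap n) ^ a * f0 := by
    funext i
    apply Fin.ext
    show _ = (((tmap n) ^ a) (f0 i) : ℕ)
    rw [tpow_val (by omega), hf0val]
    have := (f i).isLt
    have := hge i
    omega
  rw [hdecomp]
  exact mul_mem (pow_mem (Submonoid.subset_closure tmap_mem) a)
    (gen0 hn (n - 1) f0 hwf0 (by rw [hf0val]; omega) (by omega))

lemma fj_collapsesExactly {n j : ℕ} (hj : j + 1 < n) : collapsesExactly n j (fj n j) := by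
  intro k hk
  constructor
  · intro h
    by_contra hne
    exact fj_ne hk hne h
  · intro h
    subst h
    exact fj_collapse hk

end WAux

open WAux

/-- The rank of the monoid `wEnd P⃗ₙ` is `n - 1`: `n - 1` is the least cardinality of a
set of weak endomorphisms generating all of them under composition. -/
theorem stmt_16 (n : ℕ) (hn : 3 ≤ n) :
    IsLeast {m : ℕ | ∃ S : Set (Function.End (Fin n)), S.Finite ∧ S.ncard = m ∧
      (∀ f ∈ S, wEnd n f) ∧
      ∀ f : Fin n → Fin n, wEnd n f →
        (f : Function.End (Fin n)) ∈ Submonoid.closure S} (n - 1) := by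
  constructor
  · -- membership: genSet works
    refine ⟨genSet n, ?_, ?_, ?_, ?_⟩
    · exact Set.Finite.insert _ (((Finset.range (n - 2) : Set ℕ).toFinite).image _)
    · have hinj : Set.InjOn (fun j => fj n j) ↑(Finset.range (n - 2)) := by
        intro a ha b hb he
        simp only [Finset.coe_range, Set.mem_Iio] at ha hb
        by_contra hne
        exact collapsesExactly_ne (by omega) (by omega) hne
          (fj_collapsesExactly (by omega)) (fj_collapsesExactly (by omega)) he
      have hnot : tmap n ∉ (fun j => fj n j) '' ↑(Finset.range (n - 2)) := by
        rintro ⟨j, hj, he⟩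
        have := congrArg (fun g : Function.End (Fin n) => (g ⟨0, by omega⟩ : ℕ)) he
        simp only [fj_val, tmap_val] at this
        simp at this
        omega
      rw [genSet, Set.ncard_insert_of_notMem hnot
          (((Finset.range (n - 2) : Set ℕ).toFinite).image _),
        Set.ncard_image_of_injOn hinj, Set.ncard_coe_finset, Finset.card_range]
      omega
    · intro f hf
      rcases Set.mem_insert_iff.mp hf with h | ⟨j, _, rfl⟩
      · rw [h]; exact wEnd_tmap n
      · exact wEnd_fj n j
    · intro f hf
      exact gen_main hn f hf
  · -- lower bound
    rintro m ⟨S, hfin, hcard, hwS, hgen⟩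
    have hch : ∀ j : ℕ, j + 1 < n → ∃ g, g ∈ S ∧ collapsesExactly n j g := by
      intro j hj
      have hmem : (fj n j : Function.End (Fin n)) ∈ Submonoid.closure S :=
        hgen (fj n j) (wEnd_fj n j)
      obtain ⟨l, hl, hprod⟩ := Submonoid.exists_list_of_mem_closure hmem
      obtain ⟨g, hg, hcg⟩ := lb_list l (fun g hg => hwS g (hl g hg)) j hj hprod
      exact ⟨g, hl g hg, hcg⟩
    choose g hgS hgcol using hch
    have hcardle : (Finset.range (n - 1)).card ≤ hfin.toFinset.card := by
      refine Finset.card_le_card_of_injOn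
        (fun j => if h : j + 1 < n then g j h else 1) ?_ ?_
      · intro j hj
        simp only [Finset.coe_range, Set.mem_Iio, Finset.mem_range] at hj
        show (if h : j + 1 < n then g j h else 1) ∈ hfin.toFinset
        rw [dif_pos (show j + 1 < n by omega)]
        exact (Set.Finite.mem_toFinset hfin).mpr (hgS j _)
      · intro a ha b hb heq
        simp only [Finset.coe_range, Set.mem_Iio] at ha hb
        have heq' : (if h : a + 1 < n then g a h else 1) = (if h : b + 1 < n then g b h else 1) := heq
        rw [dif_pos (show a + 1 < n by omega), dif_pos (show b + 1 < n by omega)] at heq'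
        by_contra hne
        exact collapsesExactly_ne (by omega) (by omega) hne (hgcol a _) (hgcol b _) heq'
    rw [Finset.card_range] at hcardle
    have : hfin.toFinset.card = m := by
      rw [← hcard, ← Set.ncard_coe_finset, Set.Finite.coe_toFinset]
    omega
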